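/- For every integer m ≥ 1, with β = exp(πi/m): ∑_{n=2}^∞ 1/(n^{2m}−1) = 1/2 + (2m−1)/(4m) − (π/(4m))·∑_{1 ≤ k ≤ 2m−1, k ≠ m} β^k·cot(π β^k). -/

import Mathlib

open Complex Finset Filter Metric Topology

noncomputable def eP (n : ℕ) (z : ℂ) : ℂ :=
  (Real.pi : ℂ) * z * ∏ j ∈ Finset.range n, (1 - z ^ 2 / ((j : ℂ) + 1) ^ 2)

lemma eP_differentiable (n : ℕ) : Differentiable ℂ (eP n) := by
  apply Differentiable.mul (differentiable_id.const_mul _)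
  apply Differentiable.fun_finsetProd
  intro j _
  exact (differentiable_const _).sub ((differentiable_pow 2).div_const _)

lemma eP_tendsto (z : ℂ) : Tendsto (fun n => eP n z) atTop (𝓝 (Complex.sin (Real.pi * z))) :=
  Complex.tendsto_euler_sin_prod z

lemma eP_unif {r : ℝ} (hr : 0 < r) :
    TendstoUniformlyOn eP (fun z => Complex.sin (Real.pi * z)) atTop (closedBall (0:ℂ) r) := by
  obtain ⟨N, hN⟩ := exists_nat_ge (2 * r)
  set s : Set ℂ := closedBall (0:ℂ) r with hs
  -- basic bound on the tail factors
  have hw : ∀ k : ℕ, ∀ z ∈ s, ‖z ^ 2 / ((N + k : ℂ) + 1) ^ 2‖ ≤ r ^ 2 / ((N + k : ℝ) + 1) ^ 2 := by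
    intro k z hz
    have hz' : ‖z‖ ≤ r := by simpa [hs] using hz
    have h1 : ((N + k : ℝ) + 1) ≠ 0 := by positivity
    have : ‖((N + k : ℂ) + 1) ^ 2‖ = ((N + k : ℝ) + 1) ^ 2 := by
      have : ((N + k : ℂ) + 1) = (((N + k : ℝ) + 1 : ℝ) : ℂ) := by push_cast; ring
      rw [this, norm_pow, Complex.norm_real, Real.norm_eq_abs, abs_of_pos (by positivity)]
    rw [norm_div, this, norm_pow]
    gcongr
  have hhalf : ∀ k : ℕ, r ^ 2 / ((N + k : ℝ) + 1) ^ 2 ≤ 1 / 2 := by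
    intro k
    have h1 : (0:ℝ) < (N + k : ℝ) + 1 := by positivity
    rw [div_le_div_iff₀ (by positivity) (by norm_num)]
    have h2 : 2 * r ≤ (N + k : ℝ) + 1 := by
      have : (N : ℝ) ≤ (N + k : ℝ) := by exact_mod_cast Nat.le_add_right N k
      linarith
    nlinarith [hr.le]
  -- the log tail
  set b : ℕ → ℂ → ℂ := fun k z => Complex.log (1 - z ^ 2 / ((N + k : ℂ) + 1) ^ 2) with hb
  set u : ℕ → ℝ := fun k => (3 / 2) * (r ^ 2 / ((N + k : ℝ) + 1) ^ 2) with hu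
  have hu_sum : Summable u := by
    have h0 : Summable (fun n : ℕ => 1 / ((n : ℝ) + 1) ^ 2) := by
      have := (Real.summable_one_div_nat_pow (p := 2)).mpr one_lt_two
      exact_mod_cast (summable_nat_add_iff 1).mpr this
    have h1 : Summable (fun k : ℕ => 1 / ((N + k : ℝ) + 1) ^ 2) := by
      have := (summable_nat_add_iff (f := fun n : ℕ => 1 / ((n : ℝ) + 1) ^ 2) N).mpr h0
      apply this.congr
      intro k
      push_cast
      ring_nf
    apply (h1.mul_left ((3/2) * r ^ 2)).congr
    intro k
    simp only [hu]
    ring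
  have hb_bound : ∀ (k : ℕ), ∀ z ∈ s, ‖b k z‖ ≤ u k := by
    intro k z hz
    have h1 := hw k z hz
    have h2 : ‖-(z ^ 2 / ((N + k : ℂ) + 1) ^ 2)‖ ≤ 1 / 2 := by
      rw [norm_neg]; exact le_trans h1 (hhalf k)
    have : b k z = Complex.log (1 + -(z ^ 2 / ((N + k : ℂ) + 1) ^ 2)) := by
      rw [hb]; ring_nf
    rw [this]
    calc ‖Complex.log (1 + -(z ^ 2 / ((N + k : ℂ) + 1) ^ 2))‖
        ≤ 3 / 2 * ‖-(z ^ 2 / ((N + k : ℂ) + 1) ^ 2)‖ := Complex.norm_log_one_add_half_le_self h2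
      _ ≤ 3 / 2 * (r ^ 2 / ((N + k : ℝ) + 1) ^ 2) := by
          rw [norm_neg]; gcongr
      _ = u k := rfl
  have hS := tendstoUniformlyOn_tsum_nat hu_sum hb_bound
  set S : ℂ → ℂ := fun z => ∑' k, b k z with hSdef
  set C : ℝ := ∑' k, u k with hC
  have hC0 : 0 ≤ C := tsum_nonneg (fun k => by positivity)
  -- bounds on partial sums and the limit
  have hSb : ∀ z ∈ s, ‖S z‖ ≤ C := by
    intro z hz
    have hsumm : Summable fun k => ‖b k z‖ :=
      hu_sum.of_nonneg_of_le (fun k => norm_nonneg _) (fun k => hb_bound k z hz)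
    calc ‖S z‖ ≤ ∑' k, ‖b k z‖ := norm_tsum_le_tsum_norm hsumm
    _ ≤ C := hsumm.tsum_le_tsum (fun k => hb_bound k z hz) hu_sum
  have hSnb : ∀ n, ∀ z ∈ s, ‖∑ k ∈ range n, b k z‖ ≤ C := by
    intro n z hz
    calc ‖∑ k ∈ range n, b k z‖ ≤ ∑ k ∈ range n, ‖b k z‖ := norm_sum_le _ _
    _ ≤ ∑ k ∈ range n, u k := Finset.sum_le_sum (fun k _ => hb_bound k z hz)
    _ ≤ C := hu_sum.sum_le_tsum _ (fun k _ => by positivity)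
  -- exponentials converge uniformly
  have hexp : TendstoUniformlyOn (fun n z => Complex.exp (∑ k ∈ range n, b k z))
      (fun z => Complex.exp (S z)) atTop s := by
    rw [Metric.tendstoUniformlyOn_iff]
    intro ε hε
    have hη : (0:ℝ) < min 1 (ε / (2 * Real.exp C + 1)) := by
      apply lt_min one_pos
      positivity
    filter_upwards [(Metric.tendstoUniformlyOn_iff.mp hS) _ hη] with n hn z hz
    have h1 := hn z hz
    rw [dist_eq_norm] at h1 ⊢
    have hd : ‖S z - ∑ k ∈ range n, b k z‖ ≤ 1 := le_trans h1.le (min_le_left _ _)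
    have hd2 : ‖S z - ∑ k ∈ range n, b k z‖ < ε / (2 * Real.exp C + 1) :=
      lt_of_lt_of_le h1 (min_le_right _ _)
    have key : Complex.exp (S z) - Complex.exp (∑ k ∈ range n, b k z)
        = Complex.exp (∑ k ∈ range n, b k z) * (Complex.exp (S z - ∑ k ∈ range n, b k z) - 1) := by
      rw [mul_sub, ← Complex.exp_add, mul_one]
      ring_nf
    rw [key, norm_mul]
    have e1 : ‖Complex.exp (∑ k ∈ range n, b k z)‖ ≤ Real.exp C := by
      rw [Complex.norm_exp]
      exact Real.exp_le_exp.mpr (le_trans (Complex.re_le_norm _) (hSnb n z hz))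
    have e2 : ‖Complex.exp (S z - ∑ k ∈ range n, b k z) - 1‖
        ≤ 2 * ‖S z - ∑ k ∈ range n, b k z‖ := Complex.norm_exp_sub_one_le hd
    calc ‖Complex.exp (∑ k ∈ range n, b k z)‖ * ‖Complex.exp (S z - ∑ k ∈ range n, b k z) - 1‖
        ≤ Real.exp C * (2 * ‖S z - ∑ k ∈ range n, b k z‖) := by
          apply mul_le_mul e1 e2 (norm_nonneg _) (Real.exp_nonneg _)
    _ < ε := by
        have hec : (0:ℝ) < Real.exp C := Real.exp_pos _
        have := mul_lt_mul_of_pos_left hd2 (by positivity : (0:ℝ) < 2 * Real.exp C)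
        calc Real.exp C * (2 * ‖S z - ∑ k ∈ range n, b k z‖)
            = 2 * Real.exp C * ‖S z - ∑ k ∈ range n, b k z‖ := by ring
        _ < 2 * Real.exp C * (ε / (2 * Real.exp C + 1)) := this
        _ ≤ ε := by
            rw [mul_div_assoc']
            rw [div_le_iff₀ (by positivity)]
            nlinarith [hε]
  -- factors are nonzero on s
  have hne : ∀ (k : ℕ), ∀ z ∈ s, (1 - z ^ 2 / ((N + k : ℂ) + 1) ^ 2) ≠ 0 := by
    intro k z hz h
    have h2 : ‖z ^ 2 / ((N + k : ℂ) + 1) ^ 2‖ ≤ 1/2 := le_trans (hw k z hz) (hhalf k)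
    have heq : (1:ℂ) = z ^ 2 / ((N + k : ℂ) + 1) ^ 2 := sub_eq_zero.mp h
    rw [← heq] at h2
    norm_num at h2
  have hsplit : ∀ (n : ℕ), ∀ z ∈ s, eP (N + n) z
      = eP N z * Complex.exp (∑ k ∈ range n, b k z) := by
    intro n z hz
    rw [Complex.exp_sum]
    have : ∀ k ∈ range n, Complex.exp (b k z) = 1 - z ^ 2 / ((N + k : ℂ) + 1) ^ 2 := by
      intro k _
      exact Complex.exp_log (hne k z hz)
    rw [Finset.prod_congr rfl this, eP, eP, Finset.prod_range_add]
    push_cast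
    ring
  -- identify the limit
  have hpt : ∀ z ∈ s, eP N z * Complex.exp (S z) = Complex.sin (Real.pi * z) := by
    intro z hz
    have t1 : Tendsto (fun n => eP (N + n) z) atTop (𝓝 (Complex.sin (Real.pi * z))) := by
      have := (eP_tendsto z).comp (tendsto_add_atTop_nat N)
      apply this.congr
      intro n
      simp [Nat.add_comm]
    have t2 : Tendsto (fun n => eP N z * Complex.exp (∑ k ∈ range n, b k z)) atTop
        (𝓝 (eP N z * Complex.exp (S z))) := by
      apply Tendsto.const_mul
      exact (Complex.continuous_exp.tendsto _).comp (hS.tendsto_at hz)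
    have t1' : Tendsto (fun n => eP N z * Complex.exp (∑ k ∈ range n, b k z)) atTop
        (𝓝 (Complex.sin (Real.pi * z))) := by
      apply t1.congr
      intro n
      exact hsplit n z hz
    exact tendsto_nhds_unique t2 t1'
  -- bound for eP N on s
  obtain ⟨B, hB⟩ := (isCompact_closedBall (0:ℂ) r).exists_bound_of_continuousOn
    ((eP_differentiable N).continuous.continuousOn)
  set B' : ℝ := max B 0 with hB'
  have hB'0 : 0 ≤ B' := le_max_right _ _
  have hBb : ∀ z ∈ s, ‖eP N z‖ ≤ B' := fun z hz => le_trans (hB z hz) (le_max_left _ _)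
  -- conclude
  rw [Metric.tendstoUniformlyOn_iff]
  intro ε hε
  have hε' : (0:ℝ) < ε / (B' + 1) := by positivity
  obtain ⟨n₀, hn₀⟩ := eventually_atTop.mp ((Metric.tendstoUniformlyOn_iff.mp hexp) _ hε')
  rw [eventually_atTop]
  refine ⟨N + n₀, fun n hn z hz => ?_⟩
  have hnN : N ≤ n := le_trans (Nat.le_add_right N n₀) hn
  have hrepr : n = N + (n - N) := (Nat.add_sub_cancel' hnN).symm
  have hge : n₀ ≤ n - N := by omega
  have hd := hn₀ (n - N) hge z hz
  rw [dist_eq_norm] at hd ⊢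
  have : Complex.sin (Real.pi * z) - eP n z
      = eP N z * (Complex.exp (S z) - Complex.exp (∑ k ∈ range (n - N), b k z)) := by
    have h2 := hsplit (n - N) z hz
    rw [← hrepr] at h2
    rw [mul_sub, hpt z hz, h2]
  rw [this, norm_mul]
  calc ‖eP N z‖ * ‖Complex.exp (S z) - Complex.exp (∑ k ∈ range (n - N), b k z)‖
      ≤ B' * (ε / (B' + 1)) := by
        apply mul_le_mul (hBb z hz) hd.le (norm_nonneg _) hB'0
  _ < ε := by
      rw [mul_div_assoc'] at *
      rw [div_lt_iff₀ (by positivity)]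
      nlinarith


lemma sq_sub_sq_ne (ω : ℂ) (hω : ω.im ≠ 0) (c : ℝ) : ω ^ 2 - (c : ℂ) ^ 2 ≠ 0 := by
  intro h
  have h2 : (ω - c) * (ω + c) = 0 := by linear_combination h
  rcases mul_eq_zero.mp h2 with h3 | h3
  · have : ω = (c : ℂ) := sub_eq_zero.mp h3
    apply hω; rw [this]; simp
  · have : ω = -(c : ℂ) := by linear_combination h3
    apply hω; rw [this]; simp

lemma eP_factor_ne (ω : ℂ) (hω : ω.im ≠ 0) (j : ℕ) :
    (1 : ℂ) - ω ^ 2 / ((j : ℂ) + 1) ^ 2 ≠ 0 := by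
  have hc : ((j : ℂ) + 1) ≠ 0 := by
    have : ((j : ℂ) + 1) = ((j + 1 : ℕ) : ℂ) := by push_cast; ring
    rw [this]
    exact Nat.cast_ne_zero.mpr (Nat.succ_ne_zero j)
  intro h
  apply sq_sub_sq_ne ω hω ((j : ℝ) + 1)
  have : ω ^ 2 = ((j : ℂ) + 1) ^ 2 := by
    field_simp at h
    linear_combination -h
  rw [this]; push_cast; ring

lemma logDeriv_eP (n : ℕ) (ω : ℂ) (hω : ω.im ≠ 0) :
    logDeriv (eP n) ω = 1 / ω + ∑ j ∈ Finset.range n, 2 * ω / (ω ^ 2 - ((j : ℂ) + 1) ^ 2) := by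
  have hπ : ((Real.pi : ℂ)) ≠ 0 := Complex.ofReal_ne_zero.mpr Real.pi_ne_zero
  have hω0 : ω ≠ 0 := fun h => hω (by rw [h]; simp)
  have hne : ∀ j ∈ Finset.range n, (fun z : ℂ => 1 - z ^ 2 / ((j : ℂ) + 1) ^ 2) ω ≠ 0 :=
    fun j _ => eP_factor_ne ω hω j
  have hdiff : ∀ j ∈ Finset.range n,
      DifferentiableAt ℂ (fun z : ℂ => 1 - z ^ 2 / ((j : ℂ) + 1) ^ 2) ω :=
    fun j _ => ((differentiable_const (1:ℂ)).sub ((differentiable_pow 2).div_const _)) ω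
  have h0 : eP n = fun z : ℂ =>
      ((Real.pi : ℂ) * z) * ∏ j ∈ Finset.range n, (1 - z ^ 2 / ((j : ℂ) + 1) ^ 2) := rfl
  rw [h0, logDeriv_mul ω (by simp [hπ, hω0]) (Finset.prod_ne_zero_iff.mpr hne)
      ((differentiable_fun_id.const_mul _) ω)
      ((Differentiable.fun_finsetProd (fun j _ =>
        (differentiable_const (1:ℂ)).fun_sub ((differentiable_pow 2).div_const _))) ω),
    logDeriv_const_mul ω _ hπ, logDeriv_id', logDeriv_prod hne hdiff]
  congr 1
  apply Finset.sum_congr rfl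
  intro j _
  have hc : ((j : ℂ) + 1) ≠ 0 := by
    have : ((j : ℂ) + 1) = ((j + 1 : ℕ) : ℂ) := by push_cast; ring
    rw [this]; exact Nat.cast_ne_zero.mpr (Nat.succ_ne_zero j)
  have hD : HasDerivAt (fun z : ℂ => 1 - z ^ 2 / ((j : ℂ) + 1) ^ 2)
      (-(2 * ω / ((j : ℂ) + 1) ^ 2)) ω := by
    have := ((hasDerivAt_pow 2 ω).div_const (((j : ℂ) + 1) ^ 2)).const_sub (1 : ℂ)
    refine this.congr_deriv ?_
    push_cast; ring
  rw [logDeriv_apply, hD.deriv]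
  have hden : ω ^ 2 - ((j : ℂ) + 1) ^ 2 ≠ 0 := by
    have := sq_sub_sq_ne ω hω ((j : ℝ) + 1)
    intro h; apply this
    rw [← h]; push_cast; ring
  have hfac := eP_factor_ne ω hω j
  rw [div_eq_div_iff hfac hden]
  have hc2 : ((j : ℂ) + 1) ^ 2 ≠ 0 := pow_ne_zero 2 hc
  field_simp
  ring

lemma sin_pi_ne (ω : ℂ) (hω : ω.im ≠ 0) : Complex.sin ((Real.pi : ℂ) * ω) ≠ 0 := by
  rw [Complex.sin_ne_zero_iff]
  intro k h
  apply hω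
  have hπ : ((Real.pi : ℂ)) ≠ 0 := Complex.ofReal_ne_zero.mpr Real.pi_ne_zero
  have h' : (Real.pi : ℂ) * ω = (Real.pi : ℂ) * (k : ℂ) := by rw [h]; ring
  have : ω = (k : ℂ) := mul_left_cancel₀ hπ h'
  rw [this]; simp

lemma logDeriv_sin_pi (ω : ℂ) :
    logDeriv (fun z : ℂ => Complex.sin ((Real.pi : ℂ) * z)) ω
      = (Real.pi : ℂ) * Complex.cot ((Real.pi : ℂ) * ω) := by
  have hD : HasDerivAt (fun z : ℂ => Complex.sin ((Real.pi : ℂ) * z))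
      (Complex.cos ((Real.pi : ℂ) * ω) * (Real.pi : ℂ)) ω := by
    have h1 : HasDerivAt (fun z : ℂ => (Real.pi : ℂ) * z) ((Real.pi : ℂ)) ω := by
      simpa using (hasDerivAt_id ω).const_mul ((Real.pi : ℂ))
    exact (Complex.hasDerivAt_sin ((Real.pi : ℂ) * ω)).comp ω h1
  rw [logDeriv_apply, hD.deriv, Complex.cot_eq_cos_div_sin]
  ring

lemma cot_partial_sum (ω : ℂ) (hω : ω.im ≠ 0) :
    Filter.Tendsto (fun n => ∑ j ∈ Finset.range n, 2 * ω / (ω ^ 2 - ((j : ℂ) + 1) ^ 2))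
      Filter.atTop (𝓝 ((Real.pi : ℂ) * Complex.cot ((Real.pi : ℂ) * ω) - 1 / ω)) := by
  have hR : (0:ℝ) < ‖ω‖ + 1 := by positivity
  have hloc : TendstoLocallyUniformlyOn eP (fun z => Complex.sin ((Real.pi : ℂ) * z))
      Filter.atTop (ball (0:ℂ) (‖ω‖ + 1)) :=
    (eP_unif hR).tendstoLocallyUniformlyOn.mono ball_subset_closedBall
  have hmem : ω ∈ ball (0:ℂ) (‖ω‖ + 1) := by
    rw [mem_ball_zero_iff]; linarith
  have hT := Complex.logDeriv_tendsto (f := eP) (g := fun z => Complex.sin ((Real.pi : ℂ) * z))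
    isOpen_ball hmem hloc
    (Filter.Eventually.of_forall fun n => (eP_differentiable n).differentiableOn)
    (sin_pi_ne ω hω)
  rw [logDeriv_sin_pi ω] at hT
  have hT2 : Filter.Tendsto
      (fun n => 1 / ω + ∑ j ∈ Finset.range n, 2 * ω / (ω ^ 2 - ((j : ℂ) + 1) ^ 2))
      Filter.atTop (𝓝 ((Real.pi : ℂ) * Complex.cot ((Real.pi : ℂ) * ω))) := by
    apply hT.congr
    intro n
    exact logDeriv_eP n ω hω
  have := hT2.sub_const (1 / ω)
  apply this.congr
  intro n
  ring

lemma root_partial_frac (m : ℕ) (hm : 1 ≤ m) (ζ : ℂ) (hζ : IsPrimitiveRoot ζ m)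
    (y : ℂ) (hy : y ^ m ≠ 1) :
    (1 : ℂ) / (y ^ m - 1) = (1 / m) * ∑ j ∈ Finset.range m, ζ ^ j / (y - ζ ^ j) := by
  have hm0 : (m : ℂ) ≠ 0 := Nat.cast_ne_zero.mpr (by omega)
  have hζm : ζ ^ m = 1 := hζ.pow_eq_one
  have hym : y ^ m - 1 ≠ 0 := sub_ne_zero.mpr hy
  have hyj : ∀ j : ℕ, y - ζ ^ j ≠ 0 := by
    intro j h
    apply hy
    have h1 : y = ζ ^ j := sub_eq_zero.mp h
    rw [h1, ← pow_mul, mul_comm j m, pow_mul, hζm, one_pow]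
  have key : ∀ j ∈ Finset.range m, ζ ^ j / (y - ζ ^ j)
      = (∑ i ∈ Finset.range m, y ^ i * (ζ ^ j) ^ (m - 1 - i)) * ζ ^ j / (y ^ m - 1) := by
    intro j _
    have h1 : (ζ ^ j) ^ m = 1 := by rw [← pow_mul, mul_comm j m, pow_mul, hζm, one_pow]
    have hg := geom_sum₂_mul y (ζ ^ j) m
    rw [h1] at hg
    rw [div_eq_div_iff (hyj j) hym,
      show (∑ i ∈ Finset.range m, y ^ i * (ζ ^ j) ^ (m - 1 - i)) * ζ ^ j * (y - ζ ^ j)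
        = ζ ^ j * ((∑ i ∈ Finset.range m, y ^ i * (ζ ^ j) ^ (m - 1 - i)) * (y - ζ ^ j)) from by
          ring, hg]
  rw [Finset.sum_congr rfl key, ← Finset.sum_div]
  have h2 : ∑ j ∈ Finset.range m, (∑ i ∈ Finset.range m, y ^ i * (ζ ^ j) ^ (m - 1 - i)) * ζ ^ j
      = ∑ i ∈ Finset.range m, y ^ i * (∑ j ∈ Finset.range m, (ζ ^ (m - i)) ^ j) := by
    calc ∑ j ∈ Finset.range m, (∑ i ∈ Finset.range m, y ^ i * (ζ ^ j) ^ (m - 1 - i)) * ζ ^ j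
        = ∑ j ∈ Finset.range m, ∑ i ∈ Finset.range m,
            y ^ i * ((ζ ^ j) ^ (m - 1 - i) * ζ ^ j) := by
          refine Finset.sum_congr rfl fun j _ => ?_
          rw [Finset.sum_mul]
          exact Finset.sum_congr rfl fun i _ => by ring
      _ = ∑ i ∈ Finset.range m, ∑ j ∈ Finset.range m,
            y ^ i * ((ζ ^ j) ^ (m - 1 - i) * ζ ^ j) := Finset.sum_comm
      _ = ∑ i ∈ Finset.range m, y ^ i * (∑ j ∈ Finset.range m, (ζ ^ (m - i)) ^ j) := by
          refine Finset.sum_congr rfl fun i hi => ?_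
          rw [Finset.mul_sum]
          refine Finset.sum_congr rfl fun j _ => ?_
          congr 1
          have hilt : i < m := Finset.mem_range.mp hi
          rw [← pow_mul, ← pow_add, ← pow_mul]
          congr 1
          have h7 : m - 1 - i + 1 = m - i := by omega
          calc j * (m - 1 - i) + j = j * (m - 1 - i + 1) := by ring
            _ = (m - i) * j := by rw [h7]; ring
  have h4 : ∑ i ∈ Finset.range m, y ^ i * (∑ j ∈ Finset.range m, (ζ ^ (m - i)) ^ j)
      = (m : ℂ) := by
    rw [Finset.sum_eq_single_of_mem 0 (Finset.mem_range.mpr (by omega))]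
    · simp [hζm]
    · intro i hi hne0
      have hilt : i < m := Finset.mem_range.mp hi
      have h5 : ζ ^ (m - i) ≠ 1 := hζ.pow_ne_one_of_pos_of_lt (by omega) (by omega)
      rw [geom_sum_eq h5]
      have h6 : (ζ ^ (m - i)) ^ m = 1 := by
        rw [← pow_mul, mul_comm, pow_mul, hζm, one_pow]
      rw [h6]
      simp
  rw [h2, h4]
  field_simp

lemma pf_applied (m : ℕ) (hm : 1 ≤ m) (ζ : ℂ) (hζ : IsPrimitiveRoot ζ m) (n : ℕ) :
    (1 : ℂ) / (((n : ℂ) + 2) ^ (2 * m) - 1)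
      = (1 / m) * ∑ j ∈ Finset.range m, ζ ^ j / (((n : ℂ) + 2) ^ 2 - ζ ^ j) := by
  have hx : (((n : ℂ) + 2) ^ 2) ^ m = ((n : ℂ) + 2) ^ (2 * m) := by rw [← pow_mul]
  have hnorm : ‖((n : ℂ) + 2) ^ (2 * m)‖ = ((n : ℝ) + 2) ^ (2 * m) := by
    rw [norm_pow]
    congr 1
    rw [show ((n : ℂ) + 2) = ((((n : ℝ) + 2) : ℝ) : ℂ) by push_cast; ring,
      Complex.norm_real, Real.norm_eq_abs, abs_of_pos (by positivity)]
  have hy : (((n : ℂ) + 2) ^ 2) ^ m ≠ 1 := by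
    rw [hx]
    intro h
    have h1 : ‖((n : ℂ) + 2) ^ (2 * m)‖ = 1 := by rw [h, norm_one]
    rw [hnorm] at h1
    have h2 : (2 : ℝ) ^ (2 * m) ≤ ((n : ℝ) + 2) ^ (2 * m) := by
      apply pow_le_pow_left₀ (by norm_num)
      have : (0:ℝ) ≤ (n : ℝ) := Nat.cast_nonneg n
      linarith
    have h3 : (2 : ℝ) ^ 2 ≤ (2 : ℝ) ^ (2 * m) := by
      apply pow_le_pow_right₀ (by norm_num)
      omega
    norm_num at h3
    linarith
  rw [← hx]
  exact root_partial_frac m hm ζ hζ _ hy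

lemma inv_nat_add_tendsto (c : ℝ) :
    Filter.Tendsto (fun M : ℕ => 1 / ((M : ℂ) + c)) Filter.atTop (𝓝 0) := by
  have h0 : Filter.Tendsto (fun M : ℕ => (M : ℝ) + c) Filter.atTop Filter.atTop :=
    Filter.tendsto_atTop_add_const_right _ c tendsto_natCast_atTop_atTop
  have h1 : Filter.Tendsto (fun M : ℕ => 1 / ((M : ℝ) + c)) Filter.atTop (𝓝 0) := by
    simpa [one_div, Function.comp_def] using tendsto_inv_atTop_zero.comp h0
  have h2 := (Complex.continuous_ofReal.tendsto (0 : ℝ)).comp h1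
  simp only [Complex.ofReal_zero] at h2
  apply h2.congr
  intro M
  simp only [Function.comp_apply]
  push_cast
  ring

lemma tele_sum :
    Filter.Tendsto (fun M : ℕ => ∑ n ∈ Finset.range M, (1 : ℂ) / (((n : ℂ) + 2) ^ 2 - 1))
      Filter.atTop (𝓝 (3 / 4)) := by
  have hterm : ∀ n : ℕ, (1 : ℂ) / (((n : ℂ) + 2) ^ 2 - 1)
      = (1 / 2) * ((1 / ((n : ℂ) + 1) - 1 / (((n + 1) : ℕ) + 1))
          + (1 / ((n : ℂ) + 2) - 1 / (((n + 1) : ℕ) + 2))) := by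
    intro n
    have h1 : ((n : ℂ) + 1) ≠ 0 := by
      rw [show ((n : ℂ) + 1) = ((n + 1 : ℕ) : ℂ) by push_cast; ring]
      exact Nat.cast_ne_zero.mpr (by omega)
    have h2 : ((n : ℂ) + 2) ≠ 0 := by
      rw [show ((n : ℂ) + 2) = ((n + 2 : ℕ) : ℂ) by push_cast; ring]
      exact Nat.cast_ne_zero.mpr (by omega)
    have h3 : ((n : ℂ) + 3) ≠ 0 := by
      rw [show ((n : ℂ) + 3) = ((n + 3 : ℕ) : ℂ) by push_cast; ring]
      exact Nat.cast_ne_zero.mpr (by omega)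
    have key : ∀ x : ℂ, x + 1 ≠ 0 → x + 2 ≠ 0 → x + 3 ≠ 0 →
        1 / ((x + 2) ^ 2 - 1)
          = (1 / 2) * ((1 / (x + 1) - 1 / (x + 2)) + (1 / (x + 2) - 1 / (x + 3))) := by
      intro x hx1 hx2 hx3
      have h4 : ((x + 2) ^ 2 - 1) = (x + 1) * (x + 3) := by ring
      rw [h4]
      field_simp
      ring
    rw [show ((((n + 1) : ℕ) : ℂ) + 1) = (n : ℂ) + 2 by push_cast; ring,
      show ((((n + 1) : ℕ) : ℂ) + 2) = (n : ℂ) + 3 by push_cast; ring]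
    exact key ((n : ℂ)) h1 h2 h3
  have hsum : ∀ M : ℕ, ∑ n ∈ Finset.range M, (1 : ℂ) / (((n : ℂ) + 2) ^ 2 - 1)
      = (1 / 2) * ((1 - 1 / ((M : ℂ) + 1)) + (1 / 2 - 1 / ((M : ℂ) + 2))) := by
    intro M
    rw [Finset.sum_congr rfl (fun n _ => hterm n), ← Finset.mul_sum, Finset.sum_add_distrib,
      Finset.sum_range_sub' (fun n => 1 / ((n : ℂ) + 1)),
      Finset.sum_range_sub' (fun n => 1 / ((n : ℂ) + 2))]
    norm_num
  rw [show (fun M : ℕ => ∑ n ∈ Finset.range M, (1 : ℂ) / (((n : ℂ) + 2) ^ 2 - 1))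
      = fun M : ℕ => (1 / 2) * ((1 - 1 / ((M : ℂ) + 1)) + (1 / 2 - 1 / ((M : ℂ) + 2)))
      from funext hsum]
  have l1 := inv_nat_add_tendsto 1
  have l2 := inv_nat_add_tendsto 2
  norm_num at l1 l2
  have := (((tendsto_const_nhds (x := (1:ℂ))).sub l1).add
    ((tendsto_const_nhds (x := (1/2 : ℂ))).sub l2)).const_mul (1/2 : ℂ)
  norm_num at this
  convert this using 2
  norm_num

lemma sum_sq_tendsto (ω : ℂ) (hω : ω.im ≠ 0) :
    Filter.Tendsto (fun M : ℕ => ∑ n ∈ Finset.range M, ω ^ 2 / (((n : ℂ) + 2) ^ 2 - ω ^ 2))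
      Filter.atTop
      (𝓝 ((1 - (Real.pi : ℂ) * ω * Complex.cot ((Real.pi : ℂ) * ω)) / 2
          - ω ^ 2 / (1 - ω ^ 2))) := by
  have base := cot_partial_sum ω hω
  -- multiply by (-ω/2)
  have hmul := base.const_mul (-ω / 2)
  have hstep : Filter.Tendsto (fun M : ℕ => ∑ j ∈ Finset.range M, ω ^ 2 / (((j : ℂ) + 1) ^ 2 - ω ^ 2))
      Filter.atTop (𝓝 ((1 - (Real.pi : ℂ) * ω * Complex.cot ((Real.pi : ℂ) * ω)) / 2)) := by
    have heq : ∀ M : ℕ, (-ω / 2) * ∑ j ∈ Finset.range M, 2 * ω / (ω ^ 2 - ((j : ℂ) + 1) ^ 2)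
        = ∑ j ∈ Finset.range M, ω ^ 2 / (((j : ℂ) + 1) ^ 2 - ω ^ 2) := by
      intro M
      rw [Finset.mul_sum]
      refine Finset.sum_congr rfl fun j _ => ?_
      have hden : ω ^ 2 - ((j : ℂ) + 1) ^ 2 ≠ 0 := by
        have := sq_sub_sq_ne ω hω ((j : ℝ) + 1)
        intro h; apply this; rw [← h]; push_cast; ring
      have hden' : ((j : ℂ) + 1) ^ 2 - ω ^ 2 ≠ 0 := fun h => hden (by linear_combination -h)
      field_simp
      ring
    have hlim : (-ω / 2) * ((Real.pi : ℂ) * Complex.cot ((Real.pi : ℂ) * ω) - 1 / ω)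
        = (1 - (Real.pi : ℂ) * ω * Complex.cot ((Real.pi : ℂ) * ω)) / 2 := by
      have hω0 : ω ≠ 0 := fun h => hω (by rw [h]; simp)
      field_simp
      ring
    rw [← hlim]
    exact hmul.congr heq
  -- shift the index by one
  have hshift := hstep.comp (tendsto_add_atTop_nat 1)
  have heq2 : ∀ M : ℕ, (∑ j ∈ Finset.range (M + 1), ω ^ 2 / (((j : ℂ) + 1) ^ 2 - ω ^ 2))
      - ω ^ 2 / (1 - ω ^ 2)
      = ∑ n ∈ Finset.range M, ω ^ 2 / (((n : ℂ) + 2) ^ 2 - ω ^ 2) := by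
    intro M
    rw [Finset.sum_range_succ' (fun j => ω ^ 2 / (((j : ℂ) + 1) ^ 2 - ω ^ 2)) M]
    have hc : ∀ j ∈ Finset.range M,
        ω ^ 2 / ((((j + 1 : ℕ) : ℂ) + 1) ^ 2 - ω ^ 2) = ω ^ 2 / (((j : ℂ) + 2) ^ 2 - ω ^ 2) := by
      intro j _
      congr 2
      push_cast
      ring
    rw [Finset.sum_congr rfl hc]
    norm_num
  have := hshift.sub_const (ω ^ 2 / (1 - ω ^ 2))
  apply this.congr
  intro M
  simp only [Function.comp_apply]
  exact heq2 M

lemma zeta_frac_sum (m : ℕ) (hm : 1 ≤ m) (ζ : ℂ) (hζ : IsPrimitiveRoot ζ m) :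
    ∑ i ∈ Finset.range (m - 1), ζ ^ (i + 1) / (1 - ζ ^ (i + 1)) = -(((m : ℂ) - 1) / 2) := by
  have hζm : ζ ^ m = 1 := hζ.pow_eq_one
  set f : ℕ → ℂ := fun i => ζ ^ (i + 1) / (1 - ζ ^ (i + 1)) with hf
  have hrev : ∑ i ∈ Finset.range (m - 1), f i
      = ∑ i ∈ Finset.range (m - 1), f (m - 1 - 1 - i) :=
    (Finset.sum_range_reflect f (m - 1)).symm
  have hpair : ∀ i ∈ Finset.range (m - 1), f i + f (m - 1 - 1 - i) = -1 := by
    intro i hi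
    have hilt : i < m - 1 := Finset.mem_range.mp hi
    have ha : 0 < i + 1 ∧ i + 1 < m := by omega
    have hb : 0 < (m - 1 - 1 - i) + 1 ∧ (m - 1 - 1 - i) + 1 < m := by omega
    have hab : (i + 1) + ((m - 1 - 1 - i) + 1) = m := by omega
    have hx1 : ζ ^ (i + 1) ≠ 1 := hζ.pow_ne_one_of_pos_of_lt ha.1.ne' ha.2
    have hy1 : ζ ^ ((m - 1 - 1 - i) + 1) ≠ 1 := hζ.pow_ne_one_of_pos_of_lt hb.1.ne' hb.2
    have hxy : ζ ^ (i + 1) * ζ ^ ((m - 1 - 1 - i) + 1) = 1 := by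
      rw [← pow_add, hab, hζm]
    have hx1' : 1 - ζ ^ (i + 1) ≠ 0 := fun h => hx1 (by linear_combination -h)
    have hy1' : 1 - ζ ^ ((m - 1 - 1 - i) + 1) ≠ 0 := fun h => hy1 (by linear_combination -h)
    rw [hf]
    field_simp
    linear_combination -hxy
  have h2 : (∑ i ∈ Finset.range (m - 1), f i) + (∑ i ∈ Finset.range (m - 1), f i)
      = -(((m : ℂ)) - 1) := by
    nth_rewrite 2 [hrev]
    rw [← Finset.sum_add_distrib, Finset.sum_congr rfl hpair, Finset.sum_const,
      Finset.card_range, nsmul_eq_mul]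
    rw [Nat.cast_sub hm]
    push_cast
    ring
  linear_combination h2 / 2

lemma cot_odd (x : ℂ) : Complex.cot (-x) = -Complex.cot x := by
  rw [Complex.cot_eq_cos_div_sin, Complex.cot_eq_cos_div_sin, Complex.cos_neg,
    Complex.sin_neg, div_neg]

lemma fold_sum (m : ℕ) (hm : 1 ≤ m) (β : ℂ) (hβm : β ^ m = -1) :
    ∑ k ∈ (Finset.Icc 1 (2 * m - 1)).filter (· ≠ m),
        β ^ k * Complex.cot ((Real.pi : ℂ) * β ^ k)
      = 2 * ∑ i ∈ Finset.range (m - 1), β ^ (i + 1) * Complex.cot ((Real.pi : ℂ) * β ^ (i + 1)) := by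
  set g : ℕ → ℂ := fun k => β ^ k * Complex.cot ((Real.pi : ℂ) * β ^ k) with hg
  have hset : (Finset.Icc 1 (2 * m - 1)).filter (· ≠ m)
      = Finset.Icc 1 (m - 1) ∪ Finset.Icc (m + 1) (2 * m - 1) := by
    ext k
    simp only [Finset.mem_filter, Finset.mem_Icc, Finset.mem_union]
    omega
  have hdisj : Disjoint (Finset.Icc 1 (m - 1)) (Finset.Icc (m + 1) (2 * m - 1)) := by
    rw [Finset.disjoint_left]
    intro a ha hb
    simp only [Finset.mem_Icc] at ha hb
    omega
  rw [hset, Finset.sum_union hdisj]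
  have h1 : ∑ k ∈ Finset.Icc 1 (m - 1), g k = ∑ i ∈ Finset.range (m - 1), g (i + 1) := by
    apply Finset.sum_nbij' (fun k => k - 1) (fun i => i + 1)
    · intro a ha; simp only [Finset.mem_Icc] at ha; simp only [Finset.mem_range]; omega
    · intro a ha; simp only [Finset.mem_range] at ha; simp only [Finset.mem_Icc]; omega
    · intro a ha; simp only [Finset.mem_Icc] at ha; omega
    · intro a _; omega
    · intro a ha; simp only [Finset.mem_Icc] at ha; congr 1; omega
  have h2 : ∑ k ∈ Finset.Icc (m + 1) (2 * m - 1), g k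
      = ∑ i ∈ Finset.range (m - 1), g (i + 1) := by
    apply Finset.sum_nbij' (fun k => k - (m + 1)) (fun i => i + (m + 1))
    · intro a ha; simp only [Finset.mem_Icc] at ha; simp only [Finset.mem_range]; omega
    · intro a ha; simp only [Finset.mem_range] at ha; simp only [Finset.mem_Icc]; omega
    · intro a ha; simp only [Finset.mem_Icc] at ha; omega
    · intro a _; omega
    · intro a ha
      simp only [Finset.mem_Icc] at ha
      have hrepr : a = (a - (m + 1)) + 1 + m := by omega
      rw [hg]
      simp only
      rw [show β ^ a = β ^ ((a - (m + 1)) + 1 + m) from by rw [← hrepr]]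
      rw [pow_add, hβm, mul_neg_one]
      rw [mul_neg, cot_odd, mul_neg, neg_mul, neg_neg]
  rw [h1, h2]
  ring

lemma summable_real_zeta (m : ℕ) (hm : 1 ≤ m) :
    Summable (fun n : ℕ => (1 : ℝ) / (((n : ℝ) + 2) ^ (2 * m) - 1)) := by
  have h0 : Summable (fun n : ℕ => 1 / ((n : ℝ) + 2) ^ 2) := by
    have := (Real.summable_one_div_nat_pow (p := 2)).mpr one_lt_two
    have h1 := (summable_nat_add_iff (f := fun n : ℕ => 1 / (n : ℝ) ^ 2) 2).mpr this
    apply h1.congr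
    intro n
    push_cast
    ring_nf
  have h1 := h0.mul_left 2
  apply Summable.of_nonneg_of_le _ _ h1
  · intro n
    have hgt : (1:ℝ) < ((n : ℝ) + 2) ^ (2 * m) := by
      have h2 : (2 : ℝ) ^ (2 * m) ≤ ((n : ℝ) + 2) ^ (2 * m) := by
        apply pow_le_pow_left₀ (by norm_num)
        have : (0:ℝ) ≤ (n : ℝ) := Nat.cast_nonneg n
        linarith
      have h3 : (2 : ℝ) ^ 2 ≤ (2 : ℝ) ^ (2 * m) := by
        apply pow_le_pow_right₀ (by norm_num); omega
      norm_num at h3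
      linarith
    have : (0:ℝ) < ((n : ℝ) + 2) ^ (2 * m) - 1 := by linarith
    exact le_of_lt (div_pos one_pos this)
  · intro n
    have hsq : (2:ℝ) ≤ (n : ℝ) + 2 := by
      have : (0:ℝ) ≤ (n : ℝ) := Nat.cast_nonneg n
      linarith
    have h2 : ((n : ℝ) + 2) ^ 2 ≤ ((n : ℝ) + 2) ^ (2 * m) := by
      apply pow_le_pow_right₀ (by linarith); omega
    have h4 : (4:ℝ) ≤ ((n : ℝ) + 2) ^ 2 := by nlinarith
    have hden : ((n : ℝ) + 2) ^ 2 / 2 ≤ ((n : ℝ) + 2) ^ (2 * m) - 1 := by nlinarith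
    have hpos : (0:ℝ) < ((n : ℝ) + 2) ^ 2 / 2 := by positivity
    calc (1 : ℝ) / (((n : ℝ) + 2) ^ (2 * m) - 1) ≤ 1 / (((n : ℝ) + 2) ^ 2 / 2) := by
          apply one_div_le_one_div_of_le hpos hden
    _ = 2 * (1 / ((n : ℝ) + 2) ^ 2) := by rw [one_div_div, mul_one_div]

theorem zeta_minus_one_even (m : ℕ) (hm : 1 ≤ m) :
    let β : ℂ := Complex.exp (Real.pi * I / m)
    ((∑' n : ℕ, (1 : ℝ) / (((n : ℝ) + 2) ^ (2 * m) - 1) : ℝ) : ℂ)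
      = 1 / 2 + (2 * (m : ℂ) - 1) / (4 * m)
        - (Real.pi : ℂ) / (4 * m) *
            ∑ k ∈ (Finset.Icc 1 (2 * m - 1)).filter (· ≠ m),
              β ^ k * Complex.cot (Real.pi * β ^ k) := by
  intro β
  have hm0 : (m : ℂ) ≠ 0 := Nat.cast_ne_zero.mpr (by omega)
  have hmR : (0:ℝ) < (m : ℝ) := by exact_mod_cast hm
  set ζ : ℂ := β ^ 2 with hζdef
  have hβ : β = Complex.exp ((Real.pi : ℂ) * I / m) := rfl
  have hζexp : ζ = Complex.exp (2 * (Real.pi : ℂ) * I / m) := by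
    rw [hζdef, hβ, sq, ← Complex.exp_add]
    congr 1
    ring
  have hζ : IsPrimitiveRoot ζ m := by
    rw [hζexp]
    exact Complex.isPrimitiveRoot_exp m (by omega)
  have hβm : β ^ m = -1 := by
    rw [hβ, ← Complex.exp_nat_mul]
    rw [show (m : ℂ) * ((Real.pi : ℂ) * I / m) = (Real.pi : ℂ) * I from by field_simp]
    exact Complex.exp_pi_mul_I
  -- imaginary parts of β^(i+1)
  have hωim : ∀ i : ℕ, i < m - 1 → (β ^ (i + 1)).im ≠ 0 := by
    intro i hi
    have hβpow : β ^ (i + 1)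
        = Complex.exp (((Real.pi * (i + 1) / m : ℝ) : ℂ) * I) := by
      rw [hβ, ← Complex.exp_nat_mul]
      congr 1
      push_cast
      field_simp
    rw [hβpow, Complex.exp_ofReal_mul_I_im]
    have h1 : (0:ℝ) < Real.pi * (i + 1) / m := by positivity
    have h2 : Real.pi * (i + 1) / m < Real.pi := by
      rw [div_lt_iff₀ hmR]
      have : ((i : ℝ) + 1) < (m : ℝ) := by
        have : (i + 1 : ℕ) < m := by omega
        exact_mod_cast this
      nlinarith [Real.pi_pos]
    exact ne_of_gt (Real.sin_pos_of_pos_of_lt_pi h1 h2)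
  -- LHS as a limit
  have hsumR := summable_real_zeta m hm
  have hTlim : Filter.Tendsto
      (fun M : ℕ => ∑ n ∈ Finset.range M, (1 : ℂ) / (((n : ℂ) + 2) ^ (2 * m) - 1))
      Filter.atTop
      (𝓝 (((∑' n : ℕ, (1 : ℝ) / (((n : ℝ) + 2) ^ (2 * m) - 1) : ℝ) : ℂ))) := by
    have h0 := hsumR.hasSum.tendsto_sum_nat
    have h1 := (Complex.continuous_ofReal.tendsto _).comp h0
    apply h1.congr
    intro M
    simp only [Function.comp_apply]
    push_cast
    rfl
  -- RHS partial fraction decomposition of the partial sums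
  have hdecomp : ∀ M : ℕ,
      ∑ n ∈ Finset.range M, (1 : ℂ) / (((n : ℂ) + 2) ^ (2 * m) - 1)
        = (1 / (m : ℂ)) * ((∑ n ∈ Finset.range M, (1 : ℂ) / (((n : ℂ) + 2) ^ 2 - 1))
            + ∑ i ∈ Finset.range (m - 1), ∑ n ∈ Finset.range M,
                ζ ^ (i + 1) / (((n : ℂ) + 2) ^ 2 - ζ ^ (i + 1))) := by
    intro M
    have h1 : ∀ n ∈ Finset.range M, (1 : ℂ) / (((n : ℂ) + 2) ^ (2 * m) - 1)
        = (1 / m) * ∑ j ∈ Finset.range m, ζ ^ j / (((n : ℂ) + 2) ^ 2 - ζ ^ j) :=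
      fun n _ => pf_applied m hm ζ hζ n
    rw [Finset.sum_congr rfl h1, ← Finset.mul_sum, Finset.sum_comm]
    congr 1
    have hm1 : m = (m - 1) + 1 := by omega
    rw [show ∑ j ∈ Finset.range m, ∑ n ∈ Finset.range M,
          ζ ^ j / (((n : ℂ) + 2) ^ 2 - ζ ^ j)
        = ∑ j ∈ Finset.range ((m - 1) + 1), ∑ n ∈ Finset.range M,
          ζ ^ j / (((n : ℂ) + 2) ^ 2 - ζ ^ j) from by rw [← hm1]]
    rw [Finset.sum_range_succ']
    rw [add_comm]
    congr 1
  -- limit of the partial sums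
  have hRlim : Filter.Tendsto
      (fun M : ℕ => ∑ n ∈ Finset.range M, (1 : ℂ) / (((n : ℂ) + 2) ^ (2 * m) - 1))
      Filter.atTop
      (𝓝 ((1 / (m : ℂ)) * ((3 / 4)
          + ∑ i ∈ Finset.range (m - 1),
              ((1 - (Real.pi : ℂ) * β ^ (i + 1) * Complex.cot ((Real.pi : ℂ) * β ^ (i + 1))) / 2
                - ζ ^ (i + 1) / (1 - ζ ^ (i + 1)))))) := by
    rw [show (fun M : ℕ => ∑ n ∈ Finset.range M, (1 : ℂ) / (((n : ℂ) + 2) ^ (2 * m) - 1))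
        = fun M : ℕ => (1 / (m : ℂ)) * ((∑ n ∈ Finset.range M, (1 : ℂ) / (((n : ℂ) + 2) ^ 2 - 1))
            + ∑ i ∈ Finset.range (m - 1), ∑ n ∈ Finset.range M,
                ζ ^ (i + 1) / (((n : ℂ) + 2) ^ 2 - ζ ^ (i + 1))) from funext hdecomp]
    apply Filter.Tendsto.const_mul
    apply Filter.Tendsto.add tele_sum
    apply tendsto_finset_sum
    intro i hi
    have hilt : i < m - 1 := Finset.mem_range.mp hi
    have him := hωim i hilt
    have hpow : ζ ^ (i + 1) = (β ^ (i + 1)) ^ 2 := by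
      rw [hζdef, ← pow_mul, ← pow_mul, mul_comm]
    rw [hpow]
    exact sum_sq_tendsto (β ^ (i + 1)) him
  -- identify
  have hEq := tendsto_nhds_unique hTlim hRlim
  rw [hEq]
  -- final algebra
  rw [fold_sum m hm β hβm]
  have hA : ∑ i ∈ Finset.range (m - 1),
      (1 - (Real.pi : ℂ) * β ^ (i + 1) * Complex.cot ((Real.pi : ℂ) * β ^ (i + 1))) / 2
      = ((m : ℂ) - 1) / 2 - ((Real.pi : ℂ) / 2) * ∑ i ∈ Finset.range (m - 1),
          β ^ (i + 1) * Complex.cot ((Real.pi : ℂ) * β ^ (i + 1)) := by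
    have hterm : ∀ i ∈ Finset.range (m - 1),
        (1 - (Real.pi : ℂ) * β ^ (i + 1) * Complex.cot ((Real.pi : ℂ) * β ^ (i + 1))) / 2
          = 1 / 2 - (Real.pi : ℂ) / 2
              * (β ^ (i + 1) * Complex.cot ((Real.pi : ℂ) * β ^ (i + 1))) := fun i _ => by ring
    rw [Finset.sum_congr rfl hterm, Finset.sum_sub_distrib, Finset.sum_const, Finset.card_range,
      nsmul_eq_mul, Nat.cast_sub hm, ← Finset.mul_sum]
    push_cast
    ring
  rw [Finset.sum_sub_distrib, zeta_frac_sum m hm ζ hζ, hA]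
  field_simp
  ring
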